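/- arXiv:1502.05727 — 3 statements merged into one kernel-verified Lean document; each statement's English description precedes it below -/
import Mathlib

section
/- Let k be a field of characteristic p > 0 and let G be an elementary abelian p-group of order p^n (i.e. G ≅ (C_p)^n). Then t(G) = n(p-1) + 1. -/
/-- The Jacobson radical of a ring `R`, as an ideal. -/
noncomputable def jacobsonRad (R : Type*) [Ring R] : Ideal R := (⊥ : Ideal R).jacobson

/-- The nilpotency index of the Jacobson radical of `R`: the least positive
integer `s` with `J(R) ^ s = 0`. -/
noncomputable def nilIndex (R : Type*) [Ring R] : ℕ :=
  sInf {s : ℕ | 0 < s ∧ jacobsonRad R ^ s = ⊥}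

open Finset MonoidAlgebra Polynomial Pointwise

lemma map_mul_equiv {R S : Type*} [Ring R] [Ring S] (e : R ≃+* S) (I J : Ideal R) :
    Ideal.map (e : R →+* S) (I * J) = Ideal.map (e : R →+* S) I * Ideal.map (e : R →+* S) J := by
  apply le_antisymm
  · rw [Ideal.map_le_iff_le_comap]
    rw [Ideal.mul_le]
    intro r hr s hs
    simp only [Ideal.mem_comap, map_mul]
    exact Ideal.mul_mem_mul (Ideal.mem_map_of_mem _ hr) (Ideal.mem_map_of_mem _ hs)
  · rw [Ideal.mul_le]
    intro a ha b hb
    obtain ⟨r, hr, rfl⟩ := (Ideal.mem_map_iff_of_surjective _ e.surjective).1 ha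
    obtain ⟨s', hs', rfl⟩ := (Ideal.mem_map_iff_of_surjective _ e.surjective).1 hb
    rw [← map_mul]
    exact Ideal.mem_map_of_mem _ (Ideal.mul_mem_mul hr hs')

lemma map_pow_equiv {R S : Type*} [Ring R] [Ring S] (e : R ≃+* S) (I : Ideal R) :
    ∀ s : ℕ, Ideal.map (e : R →+* S) (I ^ s) = Ideal.map (e : R →+* S) I ^ s
  | 0 => by rw [Submodule.pow_zero, Submodule.pow_zero, Ideal.one_eq_top, Ideal.map_top, Ideal.one_eq_top]
  | s + 1 => by
      rw [Submodule.pow_succ, Submodule.pow_succ, map_mul_equiv, map_pow_equiv e I s]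

lemma nilIndex_eq_of_ringEquiv {R S : Type*} [Ring R] [Ring S] (e : R ≃+* S) :
    nilIndex R = nilIndex S := by
  have hmap : Ideal.map (e : R →+* S) (jacobsonRad R) = jacobsonRad S := by
    unfold jacobsonRad
    rw [Ideal.map_jacobson_of_bijective e.bijective, Ideal.map_bot]
  unfold nilIndex
  congr 1
  ext s
  simp only [Set.mem_setOf_eq, and_congr_right_iff]
  intro _
  have h2 : jacobsonRad S ^ s = Ideal.map (e : R →+* S) (jacobsonRad R ^ s) := by
    rw [map_pow_equiv, hmap]
  rw [h2, Ideal.map_eq_bot_iff_of_injective (f := (e : R →+* S)) e.injective]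

lemma prod_mem_pow {R : Type*} [CommRing R] (I : Ideal R) {ι : Type*} (s : Finset ι)
    (f : ι → R) (m : ι → ℕ) (h : ∀ i ∈ s, f i ∈ I ^ m i) :
    (∏ i ∈ s, f i) ∈ I ^ (∑ i ∈ s, m i) := by
  classical
  induction s using Finset.induction_on with
  | empty => simpa using Submodule.mem_top
  | @insert a s ha ih =>
    rw [Finset.prod_insert ha, Finset.sum_insert ha, pow_add]
    exact Ideal.mul_mem_mul (h a (Finset.mem_insert_self a s))
      (ih fun i hi => h i (Finset.mem_insert_of_mem hi))

lemma prod_sub_one_mem {R : Type*} [CommRing R] (I : Ideal R) {ι : Type*} (s : Finset ι)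
    (f : ι → R) (h : ∀ i ∈ s, f i - 1 ∈ I) : (∏ i ∈ s, f i) - 1 ∈ I := by
  classical
  induction s using Finset.induction_on with
  | empty => simpa using I.zero_mem
  | @insert a s ha ih =>
    rw [Finset.prod_insert ha]
    have key : f a * ∏ i ∈ s, f i - 1 = f a * ((∏ i ∈ s, f i) - 1) + (f a - 1) := by ring
    rw [key]
    exact I.add_mem (I.mul_mem_left _ (ih fun i hi => h i (Finset.mem_insert_of_mem hi)))
      (h a (Finset.mem_insert_self a s))

lemma geom_poly_identity (p : ℕ) (hp : p.Prime) (k : Type*) [Field k] [CharP k p] :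
    ((X : k[X]) - 1) ^ (p - 1) = ∑ i ∈ range p, (X : k[X]) ^ i := by
  haveI := Fact.mk hp
  have hX : (X : k[X]) - 1 ≠ 0 := by
    have := Polynomial.X_sub_C_ne_zero (R := k) 1
    simpa using this
  apply mul_right_cancel₀ hX
  rw [geom_sum_mul, ← pow_succ, Nat.sub_add_cancel hp.one_le, sub_pow_char, one_pow]

section Concrete

variable (p n : ℕ) (k : Type*) [Field k]

/-- the i-th standard generator of `(ZMod p)^n` (multiplicatively). -/
def eGen (i : Fin n) : Fin n → Multiplicative (ZMod p) :=
  Pi.mulSingle i (Multiplicative.ofAdd 1)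

noncomputable def xGen (i : Fin n) : MonoidAlgebra k (Fin n → Multiplicative (ZMod p)) :=
  MonoidAlgebra.of k _ (eGen p n i)

noncomputable def augI : Ideal (MonoidAlgebra k (Fin n → Multiplicative (ZMod p))) :=
  Ideal.span (Set.range fun i => xGen p n k i - 1)

lemma eGen_pow (hp : p.Prime) (i : Fin n) (m : ℕ) :
    eGen p n i ^ m = Pi.mulSingle i (Multiplicative.ofAdd (m : ZMod p)) := by
  rw [eGen, ← Pi.mulSingle_pow]
  congr 1
  rw [← ofAdd_nsmul, nsmul_eq_mul, mul_one]

lemma xGen_pow (i : Fin n) (m : ℕ) :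
    xGen p n k i ^ m = MonoidAlgebra.of k _ (eGen p n i ^ m) := by
  rw [xGen, ← map_pow]

lemma xGen_sub_one_pow_p (hp : p.Prime) [CharP k p] (i : Fin n) :
    (xGen p n k i - 1) ^ p = 0 := by
  haveI := Fact.mk hp
  have h1 : ((X : k[X]) - 1) ^ p = X ^ p - 1 := by
    rw [sub_pow_char, one_pow]
  have := congrArg (Polynomial.aeval (xGen p n k i)) h1
  simp only [map_pow, map_sub, map_one, Polynomial.aeval_X] at this
  rw [this, xGen_pow, eGen_pow p n hp, ZMod.natCast_self, ofAdd_zero, Pi.mulSingle_one,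
    map_one, sub_self]

lemma xGen_sub_one_pow (hp : p.Prime) [CharP k p] (i : Fin n) :
    (xGen p n k i - 1) ^ (p - 1) = ∑ j ∈ range p, xGen p n k i ^ j := by
  have := congrArg (Polynomial.aeval (xGen p n k i)) (geom_poly_identity p hp k)
  simpa only [map_pow, map_sub, map_sum, map_one, Polynomial.aeval_X] using this

lemma xGen_mem_augI (i : Fin n) : xGen p n k i - 1 ∈ augI p n k :=
  Ideal.subset_span ⟨i, rfl⟩

lemma of_sub_one_mem (hp : p.Prime) (g : Fin n → Multiplicative (ZMod p)) :
    MonoidAlgebra.of k _ g - 1 ∈ augI p n k := by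
  haveI : NeZero p := ⟨hp.ne_zero⟩
  have hg : g = ∏ i, Pi.mulSingle i (g i) := (Finset.univ_prod_mulSingle g).symm
  rw [hg, map_prod]
  apply prod_sub_one_mem
  intro i _
  have hsingle : Pi.mulSingle i (g i) = eGen p n i ^ (Multiplicative.toAdd (g i)).val := by
    rw [eGen_pow p n hp, ZMod.natCast_zmod_val]
    simp
  rw [hsingle, ← xGen_pow]
  have hdvd : xGen p n k i - 1 ∣ xGen p n k i ^ (Multiplicative.toAdd (g i)).val - 1 := by
    simpa using sub_dvd_pow_sub_pow (xGen p n k i) 1 (Multiplicative.toAdd (g i)).val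
  obtain ⟨c, hc⟩ := hdvd
  rw [hc]
  exact Ideal.mul_mem_right _ _ (xGen_mem_augI p n k i)

noncomputable def epsAug : MonoidAlgebra k (Fin n → Multiplicative (ZMod p)) →ₐ[k] k :=
  MonoidAlgebra.lift k k _ 1

lemma ker_epsAug (hp : p.Prime) : RingHom.ker (epsAug p n k) = augI p n k := by
  apply le_antisymm
  · -- ker ⊆ augI
    intro f hf
    have hf0 : (∑ g ∈ f.coeff.support, f.coeff g) = 0 := by
      have : epsAug p n k f = ∑ g ∈ f.coeff.support, f.coeff g := by
        rw [epsAug, MonoidAlgebra.lift_apply]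
        simp [Finsupp.sum]
      rwa [← this]
    have hrepr : f = ∑ g ∈ f.coeff.support, f.coeff g • (MonoidAlgebra.of k _ g - 1) := by
      have h1 : ∑ g ∈ f.coeff.support, f.coeff g • ((MonoidAlgebra.of k (Fin n → Multiplicative (ZMod p)) g) - 1)
          = (∑ g ∈ f.coeff.support, f.coeff g • (MonoidAlgebra.of k _ g)) - (∑ g ∈ f.coeff.support, f.coeff g) • (1 : MonoidAlgebra k (Fin n → Multiplicative (ZMod p))) := by
        rw [Finset.sum_smul]
        rw [← Finset.sum_sub_distrib]
        congr 1
        ext g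
        rw [smul_sub]
      rw [h1, hf0, zero_smul, sub_zero]
      conv_lhs => rw [← MonoidAlgebra.sum_coeff_single f]
      rw [Finsupp.sum]
      congr 1
      ext g
      rw [MonoidAlgebra.of_apply, MonoidAlgebra.smul_single', mul_one]
    rw [hrepr]
    refine Submodule.sum_mem _ fun g _ => ?_
    rw [Algebra.smul_def]
    exact Ideal.mul_mem_left _ _ (of_sub_one_mem p n k hp g)
  · -- augI ⊆ ker
    rw [augI, Ideal.span_le]
    rintro y ⟨i, rfl⟩
    simp only [SetLike.mem_coe, RingHom.mem_ker, map_sub, map_one]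
    rw [xGen, epsAug, MonoidAlgebra.lift_of]
    simp

lemma epsAug_surjective : Function.Surjective (epsAug p n k) :=
  fun c => ⟨algebraMap k _ c, (epsAug p n k).commutes c⟩

lemma augI_pow_eq_bot (hp : p.Prime) [CharP k p] :
    augI p n k ^ (n * (p - 1) + 1) = ⊥ := by
  classical
  rw [augI, eq_bot_iff]
  have hsp : Ideal.span (Set.range fun i => xGen p n k i - 1) ^ (n * (p - 1) + 1)
      = Ideal.span ((Set.range fun i => xGen p n k i - 1) ^ (n * (p - 1) + 1)) :=
    Submodule.span_pow _ _
  rw [hsp, Ideal.span_le]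
  intro a ha
  rw [Set.mem_pow] at ha
  obtain ⟨f, hf⟩ := ha
  rw [List.prod_ofFn] at hf
  have hex : ∀ j : Fin (n * (p - 1) + 1), ∃ i : Fin n, xGen p n k i - 1 = (f j : MonoidAlgebra k (Fin n → Multiplicative (ZMod p))) :=
    fun j => (f j).2
  choose ι hι using hex
  have ha' : a = ∏ j, (xGen p n k (ι j) - 1) := by
    rw [← hf]
    exact Finset.prod_congr rfl fun j _ => (hι j).symm
  -- fiberwise
  have hfib : ∏ i : Fin n, (xGen p n k i - 1) ^ (Finset.univ.filter fun j => ι j = i).card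
      = ∏ j, (xGen p n k (ι j) - 1) := by
    rw [← Finset.prod_fiberwise' Finset.univ ι (fun i => xGen p n k i - 1)]
    exact Finset.prod_congr rfl fun i _ => (Finset.prod_const _).symm
  have hcard : ∑ i : Fin n, (Finset.univ.filter fun j => ι j = i).card = n * (p - 1) + 1 := by
    rw [← Finset.card_eq_sum_card_fiberwise (fun j _ => Finset.mem_univ (ι j))]
    simp
  have hbig : ∃ i : Fin n, p ≤ (Finset.univ.filter fun j => ι j = i).card := by
    by_contra hcon
    push_neg at hcon
    have hle : ∑ i : Fin n, (Finset.univ.filter fun j => ι j = i).card ≤ n * (p - 1) := by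
      calc ∑ i : Fin n, (Finset.univ.filter fun j => ι j = i).card
          ≤ ∑ _i : Fin n, (p - 1) :=
            Finset.sum_le_sum fun i _ => Nat.le_sub_one_of_lt (hcon i)
        _ = n * (p - 1) := by simp [mul_comm]
    omega
  obtain ⟨i₀, hi₀⟩ := hbig
  have hzero : (xGen p n k i₀ - 1) ^ (Finset.univ.filter fun j => ι j = i₀).card = 0 := by
    rw [← Nat.add_sub_cancel' hi₀, pow_add, xGen_sub_one_pow_p p n k hp, zero_mul]
  simp only [SetLike.mem_coe, Ideal.mem_bot]
  rw [ha', ← hfib]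
  exact Finset.prod_eq_zero (Finset.mem_univ i₀) hzero

lemma yElt_ne_zero (hp : p.Prime) [CharP k p] :
    (∏ i : Fin n, (xGen p n k i - 1) ^ (p - 1)) ≠ 0 := by
  classical
  have hy : ∏ i : Fin n, (xGen p n k i - 1) ^ (p - 1)
      = ∑ σ ∈ Fintype.piFinset (fun _ : Fin n => range p),
          MonoidAlgebra.single (M := Fin n → Multiplicative (ZMod p))
            (fun i => Multiplicative.ofAdd ((σ i : ℕ) : ZMod p)) (1 : k) := by
    have h1 : ∀ i : Fin n, (xGen p n k i - 1) ^ (p - 1) = ∑ j ∈ range p, xGen p n k i ^ j :=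
      xGen_sub_one_pow p n k hp
    calc ∏ i : Fin n, (xGen p n k i - 1) ^ (p - 1)
        = ∏ i : Fin n, ∑ j ∈ range p, xGen p n k i ^ j := by
          exact Finset.prod_congr rfl fun i _ => h1 i
      _ = ∑ σ ∈ Fintype.piFinset (fun _ : Fin n => range p), ∏ i : Fin n, xGen p n k i ^ σ i :=
          Finset.prod_univ_sum _ _
      _ = _ := by
          apply Finset.sum_congr rfl
          intro σ _
          have : ∏ i : Fin n, xGen p n k i ^ σ i
              = MonoidAlgebra.of k _ (∏ i : Fin n, eGen p n i ^ σ i) := by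
            rw [map_prod]
            exact Finset.prod_congr rfl fun i _ => xGen_pow p n k i (σ i)
          rw [this]
          have hprod : (∏ i : Fin n, eGen p n i ^ σ i)
              = fun i => Multiplicative.ofAdd ((σ i : ℕ) : ZMod p) := by
            have : ∀ i : Fin n, eGen p n i ^ σ i
                = Pi.mulSingle i (Multiplicative.ofAdd ((σ i : ℕ) : ZMod p)) :=
              fun i => eGen_pow p n hp i (σ i)
            rw [Finset.prod_congr rfl fun i _ => this i]
            exact Finset.univ_prod_mulSingle _
          rw [hprod, MonoidAlgebra.of_apply]
  intro hzero
  have happ := congrArg (fun z => z.coeff (1 : Fin n → Multiplicative (ZMod p))) (hy ▸ hzero)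
  simp only [MonoidAlgebra.coeff_zero, Finsupp.coe_zero, Pi.zero_apply] at happ
  rw [MonoidAlgebra.coeff_sum, Finsupp.finset_sum_apply] at happ
  have hterm : ∀ σ ∈ Fintype.piFinset (fun _ : Fin n => range p),
      (MonoidAlgebra.single (M := Fin n → Multiplicative (ZMod p))
        (fun i => Multiplicative.ofAdd ((σ i : ℕ) : ZMod p)) (1 : k)).coeff
        (1 : Fin n → Multiplicative (ZMod p))
      = if σ = (fun _ => 0) then (1 : k) else 0 := by
    intro σ hσ
    rw [MonoidAlgebra.coeff_single, Finsupp.single_apply]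
    congr 1
    simp only [eq_iff_iff]
    constructor
    · intro h
      funext i
      have hi := congrFun h i
      simp only [Pi.one_apply] at hi
      have : ((σ i : ℕ) : ZMod p) = 0 := by
        have := congrArg Multiplicative.toAdd hi
        simpa using this
      rw [ZMod.natCast_eq_zero_iff] at this
      have hlt : σ i < p := by
        have := Fintype.mem_piFinset.mp hσ i
        simpa using this
      exact Nat.eq_zero_of_dvd_of_lt this hlt
    · intro h
      rw [h]
      funext i
      simp
  rw [Finset.sum_congr rfl hterm] at happ
  rw [Finset.sum_ite_eq' (Fintype.piFinset (fun _ : Fin n => range p)) (fun _ => 0) (fun _ => (1:k))] at happ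
  have hmem : (fun _ : Fin n => 0) ∈ Fintype.piFinset (fun _ : Fin n => range p) := by
    apply Fintype.mem_piFinset.mpr
    intro i
    simp [hp.pos]
  rw [if_pos hmem] at happ
  simp at happ

lemma jacobsonRad_eq_augI (hp : p.Prime) [CharP k p] :
    jacobsonRad (MonoidAlgebra k (Fin n → Multiplicative (ZMod p))) = augI p n k := by
  apply le_antisymm
  · have hmax : (RingHom.ker (epsAug p n k)).IsMaximal :=
      RingHom.ker_isMaximal_of_surjective _ (epsAug_surjective p n k)
    have : jacobsonRad (MonoidAlgebra k (Fin n → Multiplicative (ZMod p)))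
        ≤ RingHom.ker (epsAug p n k) := by
      rw [jacobsonRad, Ideal.jacobson]
      exact sInf_le ⟨bot_le, hmax⟩
    rwa [ker_epsAug p n k hp] at this
  · intro z hz
    apply Ideal.radical_le_jacobson
    refine ⟨n * (p - 1) + 1, ?_⟩
    have := Ideal.pow_mem_pow hz (n * (p - 1) + 1)
    rw [augI_pow_eq_bot p n k hp] at this
    simpa using this

lemma nilIndex_concrete (hp : p.Prime) [CharP k p] :
    nilIndex (MonoidAlgebra k (Fin n → Multiplicative (ZMod p))) = n * (p - 1) + 1 := by
  unfold nilIndex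
  rw [jacobsonRad_eq_augI p n k hp]
  have hmem : n * (p - 1) + 1 ∈ {s : ℕ | 0 < s ∧ augI p n k ^ s = ⊥} :=
    ⟨Nat.succ_pos _, augI_pow_eq_bot p n k hp⟩
  apply le_antisymm (Nat.sInf_le hmem)
  apply le_csInf ⟨_, hmem⟩
  rintro s ⟨hs0, hs⟩
  by_contra hlt
  push_neg at hlt
  have hsle : s ≤ n * (p - 1) := by omega
  have hle : augI p n k ^ (n * (p - 1)) ≤ augI p n k ^ s := Ideal.pow_le_pow_right hsle
  have hbot : augI p n k ^ (n * (p - 1)) = ⊥ := by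
    rw [eq_bot_iff]
    exact hs ▸ hle
  have hymem : (∏ i : Fin n, (xGen p n k i - 1) ^ (p - 1)) ∈ augI p n k ^ (n * (p - 1)) := by
    have := prod_mem_pow (augI p n k) Finset.univ
      (fun i => (xGen p n k i - 1) ^ (p - 1)) (fun _ => p - 1)
      (fun i _ => Ideal.pow_mem_pow (xGen_mem_augI p n k i) (p - 1))
    simpa [Finset.sum_const, Finset.card_univ, mul_comm] using this
  rw [hbot] at hymem
  exact yElt_ne_zero p n k hp (by simpa using hymem)

end Concrete

/-- For a field k of characteristic p > 0 and an elementary abelian p-group G of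
order p^n (i.e. G ≅ (C_p)^n), one has t(G) = n(p-1) + 1. -/
theorem nilIndex_elementaryAbelian
    (p n : ℕ) (hp : p.Prime) (k : Type*) [Field k] [CharP k p]
    (G : Type*) [Group G] [Fintype G]
    (hG : Nonempty (G ≃* (Fin n → Multiplicative (ZMod p)))) :
    nilIndex (MonoidAlgebra k G) = n * (p - 1) + 1 := by
  obtain ⟨φ⟩ := hG
  rw [nilIndex_eq_of_ringEquiv (MonoidAlgebra.domCongr k k φ).toRingEquiv]
  exact nilIndex_concrete p n k hp
end

section
/- Let p be a prime and let G be a finite p-group of order p^n such that Φ(G) = [G,G] has order p and Z(G) is cyclic of order p^2. Then there exists a subgroup E of G of index p such that G = E·Z(G), E ∩ Z(G) = Φ(G), and E is extraspecial with Φ(E) = Φ(G) (that is, Φ(E) = [E,E] = Z(E) and this common subgroup has order p). -/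
open Subgroup
open scoped Pointwise
open scoped commutatorElement

section Aux

variable {p : ℕ} [Fact p.Prime]

lemma mem_frattini_iff' {G : Type*} [Group G] {x : G} :
    x ∈ frattini G ↔ ∀ M : Subgroup G, IsCoatom M → x ∈ M := by
  simp only [frattini, Order.radical, Subgroup.mem_iInf, Set.mem_setOf_eq]

/-- A normal subgroup of order `p` in a finite `p`-group is central. -/
lemma normal_card_p_le_center {G : Type*} [Group G] [Finite G] (hG : IsPGroup p G)
    (N : Subgroup G) [N.Normal] (hN : Nat.card N = p) : N ≤ Subgroup.center G := by
  have hp : p.Prime := Fact.out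
  have h1 : (1 : ↥N) ∈ MulAction.fixedPoints (ConjAct G) ↥N := fun g => smul_one g
  obtain ⟨b, hb, hb1⟩ :=
    (hG.of_equiv ConjAct.toConjAct).exists_fixed_point_of_prime_dvd_card_of_fixed_point
      (↥N) (by rw [hN]) h1
  have hbc : (b : G) ∈ Subgroup.center G := by
    rw [Subgroup.mem_center_iff]
    intro g
    have h := hb (ConjAct.toConjAct g)
    have h' := congrArg Subtype.val h
    rw [ConjAct.Subgroup.val_conj_smul, ConjAct.smul_def, ConjAct.ofConjAct_toConjAct] at h'
    calc g * (b : G) = (g * (b : G) * g⁻¹) * g := by group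
    _ = (b : G) * g := by rw [h']
  have hbne : b ≠ 1 := fun h => hb1 h.symm
  have hyord : orderOf (b : G) = p := by
    rw [orderOf_coe]
    have hdvd : orderOf b ∣ p := hN ▸ orderOf_dvd_natCard b
    rcases (Nat.dvd_prime hp).mp hdvd with h | h
    · exact absurd (orderOf_eq_one_iff.mp h) hbne
    · exact h
  have hzle : Subgroup.zpowers (b : G) ≤ N := Subgroup.zpowers_le.mpr b.2
  have heq : Subgroup.zpowers (b : G) = N :=
    Subgroup.eq_of_le_of_card_ge hzle (by rw [hN, Nat.card_zpowers, hyord])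
  rw [← heq]
  exact Subgroup.zpowers_le.mpr hbc

/-- A maximal subgroup of a finite `p`-group is normal. -/
lemma coatom_normal' {P : Type*} [Group P] [Finite P] (hP : IsPGroup p P)
    {K : Subgroup P} (hK : IsCoatom K) : K.Normal := by
  have : Group.IsNilpotent P := hP.isNilpotent
  exact Subgroup.NormalizerCondition.normal_of_coatom K normalizerCondition_of_isNilpotent hK

/-- The quotient by a maximal subgroup of a finite `p`-group has order `p`. -/
lemma coatom_quotient_card {P : Type*} [Group P] [Finite P] (hP : IsPGroup p P)
    {K : Subgroup P} (hK : IsCoatom K) [K.Normal] : Nat.card (P ⧸ K) = p := by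
  have hp : p.Prime := Fact.out
  have hQ : IsPGroup p (P ⧸ K) := hP.to_quotient K
  obtain ⟨x, hx⟩ : ∃ x : P, x ∉ K := by
    by_contra h
    push_neg at h
    exact hK.1 ((Subgroup.eq_top_iff' K).mpr h)
  set b : P ⧸ K := QuotientGroup.mk' K x with hbdef
  have hbne : b ≠ 1 := by
    rw [hbdef, Ne, QuotientGroup.mk'_apply, QuotientGroup.eq_one_iff]
    exact hx
  obtain ⟨k, hk⟩ := hQ b
  obtain ⟨m, _, hm⟩ := (Nat.dvd_prime_pow hp).mp (orderOf_dvd_iff_pow_eq_one.mpr hk)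
  have hm0 : m ≠ 0 := by
    intro h
    rw [h, pow_zero] at hm
    exact hbne (orderOf_eq_one_iff.mp hm)
  set c : P ⧸ K := b ^ (p ^ (m - 1)) with hcdef
  have hcne : c ≠ 1 := by
    apply pow_ne_one_of_lt_orderOf
    · exact pow_ne_zero _ hp.ne_zero
    · rw [hm]
      exact Nat.pow_lt_pow_right hp.one_lt (Nat.sub_lt (Nat.pos_of_ne_zero hm0) one_pos)
  have hcp : c ^ p = 1 := by
    rw [hcdef, ← pow_mul, ← pow_succ, Nat.sub_add_cancel (Nat.one_le_iff_ne_zero.mpr hm0), ← hm]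
    exact pow_orderOf_eq_one b
  have hcord : orderOf c = p := by
    rcases (Nat.dvd_prime hp).mp (orderOf_dvd_iff_pow_eq_one.mpr hcp) with h | h
    · exact absurd (orderOf_eq_one_iff.mp h) hcne
    · exact h
  have hle : K ≤ Subgroup.comap (QuotientGroup.mk' K) (Subgroup.zpowers c) := by
    intro y hy
    rw [Subgroup.mem_comap]
    have h1 : QuotientGroup.mk' K y = 1 := by
      rw [QuotientGroup.mk'_apply, QuotientGroup.eq_one_iff]; exact hy
    rw [h1]
    exact Subgroup.one_mem _
  have htop : Subgroup.zpowers c = ⊤ := by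
    rcases eq_or_lt_of_le hle with heq | hlt
    · exfalso
      have hmc := Subgroup.map_comap_eq_self_of_surjective
        (QuotientGroup.mk'_surjective K) (Subgroup.zpowers c)
      rw [← heq] at hmc
      have hc2 : c ∈ Subgroup.map (QuotientGroup.mk' K) K := by
        rw [hmc]
        exact Subgroup.mem_zpowers c
      obtain ⟨y, hy, hyc⟩ := hc2
      apply hcne
      rw [← hyc, QuotientGroup.mk'_apply, QuotientGroup.eq_one_iff]
      exact hy
    · have h2 : Subgroup.comap (QuotientGroup.mk' K) (Subgroup.zpowers c) = ⊤ := hK.2 _ hlt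
      have hmc := Subgroup.map_comap_eq_self_of_surjective
        (QuotientGroup.mk'_surjective K) (Subgroup.zpowers c)
      rw [h2] at hmc
      rw [← hmc]
      rw [← MonoidHom.range_eq_map]
      exact MonoidHom.range_eq_top.mpr (QuotientGroup.mk'_surjective K)
  rw [← hcord, ← Nat.card_zpowers, htop, Subgroup.card_top]

/-- In a finite `p`-group, every maximal subgroup contains the commutator subgroup and
all `p`-th powers. -/
lemma coatom_props {P : Type*} [Group P] [Finite P] (hP : IsPGroup p P)
    {K : Subgroup P} (hK : IsCoatom K) :
    commutator P ≤ K ∧ ∀ g : P, g ^ p ∈ K := by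
  haveI := coatom_normal' hP hK
  have hcard := coatom_quotient_card hP hK
  haveI hcyc : IsCyclic (P ⧸ K) := isCyclic_of_prime_card hcard
  letI : CommGroup (P ⧸ K) := IsCyclic.commGroup
  constructor
  · rw [_root_.commutator_def, Subgroup.commutator_le]
    intro g1 _ g2 _
    have h1 : (QuotientGroup.mk' K) ⁅g1, g2⁆ = 1 := by
      rw [map_commutatorElement]
      exact commutatorElement_eq_one_iff_mul_comm.mpr (mul_comm _ _)
    rw [QuotientGroup.mk'_apply] at h1
    exact (QuotientGroup.eq_one_iff _).mp h1
  · intro g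
    have h1 : (QuotientGroup.mk' K) (g ^ p) = 1 := by
      rw [map_pow]
      exact orderOf_dvd_iff_pow_eq_one.mp (hcard ▸ orderOf_dvd_natCard _)
    rw [QuotientGroup.mk'_apply] at h1
    exact (QuotientGroup.eq_one_iff _).mp h1

lemma pow_mem_frattini {P : Type*} [Group P] [Finite P] (hP : IsPGroup p P) (g : P) :
    g ^ p ∈ frattini P :=
  mem_frattini_iff'.mpr fun _ hM => (coatom_props hP hM).2 g

/-- If a subgroup of a finite group contains the commutator subgroup and all `p`-th powers,
and `x` lies outside it, there is a maximal subgroup avoiding `x`. -/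
lemma exists_coatom_not_mem {P : Type*} [Group P] [Finite P] {C : Subgroup P}
    (hC : commutator P ≤ C) (hpow : ∀ g : P, g ^ p ∈ C) {x : P} (hx : x ∉ C) :
    ∃ W : Subgroup P, IsCoatom W ∧ x ∉ W := by
  have hp : p.Prime := Fact.out
  obtain ⟨W, hWmem, hmax⟩ := Set.Finite.exists_maximalFor id
    {W : Subgroup P | C ≤ W ∧ x ∉ W} (Set.toFinite _) ⟨C, le_rfl, hx⟩
  replace hmax : ∀ a' ∈ {W : Subgroup P | C ≤ W ∧ x ∉ W}, id W ≤ id a' → id W = id a' :=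
    fun a' ha' h => le_antisymm h (hmax ha' h)
  obtain ⟨hWC, hWx⟩ := hWmem
  simp only [id] at hmax
  have hnormal : ∀ W' : Subgroup P, C ≤ W' → W'.Normal := by
    intro W' hle
    constructor
    intro h hh g
    have hcomm : ⁅g, h⁆ ∈ commutator P := by
      rw [_root_.commutator_def]
      exact Subgroup.commutator_mem_commutator (Subgroup.mem_top g) (Subgroup.mem_top h)
    have heq : g * h * g⁻¹ = ⁅g, h⁆ * h := by rw [commutatorElement_def]; group
    rw [heq]
    exact W'.mul_mem (hle (hC hcomm)) hh
  refine ⟨W, ⟨?_, ?_⟩, hWx⟩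
  · intro h; rw [h] at hWx; exact hWx (Subgroup.mem_top x)
  · intro U hU
    have hWU : W ≤ U := hU.le
    have hxU : x ∈ U := by
      by_contra hxU
      exact hU.ne (hmax U ⟨hWC.trans hWU, hxU⟩ hWU)
    rw [Subgroup.eq_top_iff']
    intro u
    by_contra huU
    have hxsup : x ∈ W ⊔ Subgroup.zpowers u := by
      by_contra hns
      have heq := hmax (W ⊔ Subgroup.zpowers u) ⟨hWC.trans le_sup_left, hns⟩ le_sup_left
      have : u ∈ W := by rw [heq]; exact Subgroup.mem_sup_right (Subgroup.mem_zpowers u)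
      exact huU (hWU this)
    haveI := hnormal W hWC
    have hxmul : x ∈ (W : Set P) * (Subgroup.zpowers u : Set P) := by
      rw [← Subgroup.normal_mul]
      exact hxsup
    rw [Set.mem_mul] at hxmul
    obtain ⟨w, hw, cc, hcc, hwc⟩ := hxmul
    obtain ⟨k, rfl⟩ := hcc
    have hukU : u ^ k ∈ U := by
      have h1 : u ^ k = w⁻¹ * x := by rw [← hwc]; group
      rw [h1]
      exact U.mul_mem (U.inv_mem (hWU hw)) hxU
    have hupC : u ^ (p : ℤ) ∈ C := by rw [zpow_natCast]; exact hpow u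
    by_cases hpk : (p : ℤ) ∣ k
    · obtain ⟨j, rfl⟩ := hpk
      have h2 : u ^ ((p : ℤ) * j) ∈ W := by
        rw [zpow_mul]
        exact Subgroup.zpow_mem W (hWC hupC) j
      exact hWx (by rw [← hwc]; exact W.mul_mem hw h2)
    · have hnd : ¬ (p ∣ k.natAbs) := by
        intro h
        apply hpk
        rw [← Int.natAbs_dvd_natAbs, Int.natAbs_natCast]
        exact h
      have hcop : IsCoprime (k : ℤ) (p : ℤ) := by
        rw [Int.isCoprime_iff_gcd_eq_one]
        have : Int.gcd k (p : ℤ) = Nat.gcd k.natAbs p := by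
          rw [Int.gcd, Int.natAbs_natCast]
        rw [this]
        exact Nat.coprime_comm.mp ((Nat.Prime.coprime_iff_not_dvd hp).mpr hnd)
      obtain ⟨a, b, hab⟩ := hcop
      have hone : k * a + (p : ℤ) * b = 1 := by linarith
      have hu : u = (u ^ k) ^ a * (u ^ (p : ℤ)) ^ b := by
        rw [← zpow_mul, ← zpow_mul, ← zpow_add, hone, zpow_one]
      exact huU (by rw [hu]; exact U.mul_mem (U.zpow_mem hukU a) (U.zpow_mem (hWU (hWC hupC)) b))

lemma frattini_le_of {P : Type*} [Group P] [Finite P] {C : Subgroup P}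
    (hC : commutator P ≤ C) (hpow : ∀ g : P, g ^ p ∈ C) : frattini P ≤ C := by
  intro x hxf
  by_contra hx
  obtain ⟨W, hW, hxW⟩ := exists_coatom_not_mem hC hpow hx
  exact hxW (frattini_le_coatom hW hxf)

end Aux

/-- If G is a finite p-group of order p^n with Φ(G) = [G,G] of order p and Z(G)
cyclic of order p², then G has a subgroup E of index p with G = E·Z(G),
E ∩ Z(G) = Φ(G), and E extraspecial with Φ(E) = Φ(G). -/
theorem exists_extraspecial_index_p_subgroup
    (p n : ℕ) (hp : p.Prime) (G : Type*) [Group G] [Fintype G]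
    (hcard : Fintype.card G = p ^ n)
    (hfc : frattini G = commutator G)
    (hford : Nat.card (frattini G) = p)
    (hzc : IsCyclic (Subgroup.center G))
    (hzcard : Nat.card (Subgroup.center G) = p ^ 2) :
    ∃ E : Subgroup G, E.index = p ∧
      E ⊔ Subgroup.center G = ⊤ ∧
      E ⊓ Subgroup.center G = frattini G ∧
      frattini ↥E = commutator ↥E ∧
      commutator ↥E = Subgroup.center ↥E ∧
      Nat.card (Subgroup.center ↥E) = p ∧
      (frattini ↥E).map E.subtype = frattini G := by
  haveI hp' : Fact p.Prime := ⟨hp⟩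
  have hG : IsPGroup p G := IsPGroup.of_card (n := n) (by rw [Nat.card_eq_fintype_card, hcard])
  have hFZ : frattini G ≤ Subgroup.center G := normal_card_p_le_center hG _ hford
  obtain ⟨z, hz⟩ := hzc.exists_generator
  have hzordG : orderOf (z : G) = p ^ 2 := by
    rw [orderOf_coe, orderOf_eq_card_of_forall_mem_zpowers hz, hzcard]
  have hzF : (z : G) ∉ frattini G := by
    intro hmem
    have hd := Subgroup.orderOf_dvd_natCard (frattini G) hmem
    rw [hford, hzordG] at hd
    have h1 := Nat.le_of_dvd hp.pos hd
    nlinarith [hp.two_le]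
  obtain ⟨M, hM, hzM⟩ : ∃ M : Subgroup G, IsCoatom M ∧ (z : G) ∉ M := by
    by_contra h
    push_neg at h
    exact hzF (mem_frattini_iff'.mpr h)
  have hzmem : (z : G) ∈ Subgroup.center G := z.2
  have hMZtop : M ⊔ Subgroup.center G = ⊤ := by
    refine hM.2 _ (lt_of_le_of_ne le_sup_left fun h => hzM ?_)
    rw [h]
    exact Subgroup.mem_sup_right hzmem
  haveI hMnormal : M.Normal := coatom_normal' hG hM
  have hFM : frattini G ≤ M := frattini_le_coatom hM
  have hFMZ : frattini G ≤ M ⊓ Subgroup.center G := le_inf hFM hFZ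
  have hdvd1 : Nat.card ↥(M ⊓ Subgroup.center G) ∣ p ^ 2 :=
    hzcard ▸ Subgroup.card_dvd_of_le inf_le_right
  have hdvd2 : p ∣ Nat.card ↥(M ⊓ Subgroup.center G) :=
    hford ▸ Subgroup.card_dvd_of_le hFMZ
  have hcardMZ : Nat.card ↥(M ⊓ Subgroup.center G) = p := by
    obtain ⟨k, hk2, hkeq⟩ := (Nat.dvd_prime_pow hp).mp hdvd1
    interval_cases k
    · rw [pow_zero] at hkeq
      rw [hkeq] at hdvd2
      have := Nat.le_of_dvd one_pos hdvd2
      have := hp.two_le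
      omega
    · rw [hkeq, pow_one]
    · exfalso
      have heq : M ⊓ Subgroup.center G = Subgroup.center G :=
        Subgroup.eq_of_le_of_card_ge inf_le_right (by rw [hkeq, hzcard])
      have hmm : (z : G) ∈ M ⊓ Subgroup.center G := by rw [heq]; exact hzmem
      exact hzM hmm.1
  have hMZF : M ⊓ Subgroup.center G = frattini G :=
    (Subgroup.eq_of_le_of_card_ge hFMZ (by rw [hford, hcardMZ])).symm
  -- the index of M is p
  have hMindex : M.index = p := by
    set φ := (QuotientGroup.mk' M).comp (Subgroup.center G).subtype with hφ
    have hker : φ.ker = M.subgroupOf (Subgroup.center G) := by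
      ext x
      simp [hφ, MonoidHom.mem_ker, QuotientGroup.eq_one_iff, Subgroup.mem_subgroupOf]
    have hsurj : Function.Surjective φ := by
      intro q
      obtain ⟨g, rfl⟩ := QuotientGroup.mk'_surjective M q
      have hg : g ∈ (M : Set G) * (Subgroup.center G : Set G) := by
        rw [← Subgroup.normal_mul, hMZtop]
        simp
      rw [Set.mem_mul] at hg
      obtain ⟨m, hm, zz, hzz, rfl⟩ := hg
      refine ⟨⟨zz, hzz⟩, ?_⟩
      have hm1 : QuotientGroup.mk' M m = 1 := by
        rw [QuotientGroup.mk'_apply, QuotientGroup.eq_one_iff]; exact hm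
      show QuotientGroup.mk' M zz = QuotientGroup.mk' M (m * zz)
      rw [map_mul, hm1, one_mul]
    have hcardQ : Nat.card (G ⧸ M) = p := by
      have hc1 : Nat.card (↥(Subgroup.center G) ⧸ φ.ker) = Nat.card (G ⧸ M) :=
        Nat.card_congr (QuotientGroup.quotientKerEquivOfSurjective φ hsurj).toEquiv
      have h3 : Nat.card ↥(M.subgroupOf (Subgroup.center G)) = p := by
        rw [← Subgroup.inf_subgroupOf_right M (Subgroup.center G),
          Nat.card_congr (Subgroup.subgroupOfEquivOfLe inf_le_right).toEquiv]
        exact hcardMZ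
      have h2 := Subgroup.card_eq_card_quotient_mul_card_subgroup φ.ker
      rw [hzcard, hc1, hker, h3] at h2
      have h4 : Nat.card (G ⧸ M) * p = p * p := by rw [← h2, pow_two]
      exact Nat.eq_of_mul_eq_mul_right hp.pos h4
    rw [Subgroup.index_eq_card]
    exact hcardQ
  -- the commutator of M (as a subgroup of G) is the frattini subgroup
  have hMMle : ⁅M, M⁆ ≤ frattini G := by
    rw [hfc, _root_.commutator_def]
    exact Subgroup.commutator_mono le_top le_top
  have hMMne : ⁅M, M⁆ ≠ ⊥ := by
    intro hbot
    have hMcent : M ≤ Subgroup.centralizer (M : Set G) :=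
      Subgroup.commutator_eq_bot_iff_le_centralizer.mp hbot
    have hZcent : Subgroup.center G ≤ Subgroup.centralizer (M : Set G) := by
      intro g hg
      exact Subgroup.mem_centralizer_iff.mpr fun m _ => Subgroup.mem_center_iff.mp hg m
    have htopc : (⊤ : Subgroup G) ≤ Subgroup.centralizer (M : Set G) := by
      rw [← hMZtop]; exact sup_le hMcent hZcent
    have hMle : M ≤ Subgroup.center G := by
      intro m hm
      rw [Subgroup.mem_center_iff]
      intro g
      exact (Subgroup.mem_centralizer_iff.mp (htopc (Subgroup.mem_top g)) m hm).symm
    have hGab : (⊤ : Subgroup G) ≤ Subgroup.center G := by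
      rw [← hMZtop]; exact sup_le hMle le_rfl
    have hbotG : commutator G = ⊥ := by
      rw [_root_.commutator_def, eq_bot_iff, Subgroup.commutator_le]
      intro g1 _ g2 _
      rw [Subgroup.mem_bot]
      exact commutatorElement_eq_one_iff_mul_comm.mpr
        (Subgroup.mem_center_iff.mp (hGab (Subgroup.mem_top g2)) g1)
    have hcb : Nat.card (⊥ : Subgroup G) = p := by rw [← hbotG, ← hfc]; exact hford
    rw [Subgroup.card_bot] at hcb
    have := hp.one_lt
    omega
  have hMMcard : Nat.card ↥⁅M, M⁆ = p := by
    have hd : Nat.card ↥⁅M, M⁆ ∣ p := hford ▸ Subgroup.card_dvd_of_le hMMle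
    rcases (Nat.dvd_prime hp).mp hd with h | h
    · exact absurd (Subgroup.card_eq_one.mp h) hMMne
    · exact h
  have hMMeq : ⁅M, M⁆ = frattini G :=
    Subgroup.eq_of_le_of_card_ge hMMle (by rw [hford, hMMcard])
  have hmapcomm : (commutator ↥M).map M.subtype = ⁅M, M⁆ := by
    show Subgroup.map M.subtype ⁅(⊤ : Subgroup ↥M), ⊤⁆ = ⁅M, M⁆
    rw [Subgroup.map_commutator, ← MonoidHom.range_eq_map, Subgroup.range_subtype]
  have hmapcenter : (Subgroup.center ↥M).map M.subtype = frattini G := by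
    apply le_antisymm
    · rintro x ⟨y, hy, rfl⟩
      rw [← hMZF, Subgroup.mem_inf]
      refine ⟨y.2, ?_⟩
      rw [Subgroup.mem_center_iff]
      intro g
      have htopc : (⊤ : Subgroup G) ≤ Subgroup.centralizer {((y : ↥M) : G)} := by
        rw [← hMZtop]
        refine sup_le ?_ ?_
        · intro m hm
          rw [Subgroup.mem_centralizer_singleton_iff]
          exact congrArg Subtype.val (Subgroup.mem_center_iff.mp hy ⟨m, hm⟩)
        · intro zz hzz
          rw [Subgroup.mem_centralizer_singleton_iff]
          exact (Subgroup.mem_center_iff.mp hzz ((y : ↥M) : G)).symm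
      exact Subgroup.mem_centralizer_singleton_iff.mp (htopc (Subgroup.mem_top g))
    · intro x hx
      have hxMZ : x ∈ M ⊓ Subgroup.center G := by rw [hMZF]; exact hx
      refine Subgroup.mem_map.mpr ⟨⟨x, hxMZ.1⟩, ?_, rfl⟩
      rw [Subgroup.mem_center_iff]
      intro e
      apply Subtype.ext
      show (e : G) * x = x * (e : G)
      exact Subgroup.mem_center_iff.mp hxMZ.2 (e : G)
  have hinj := Subgroup.subtype_injective M
  have hcommeq : commutator ↥M = Subgroup.center ↥M :=
    Subgroup.map_injective hinj (by rw [hmapcomm, hmapcenter, hMMeq])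
  have hcardcenter : Nat.card (Subgroup.center ↥M) = p := by
    have hcc := Nat.card_congr
      (Subgroup.equivMapOfInjective (Subgroup.center ↥M) M.subtype hinj).toEquiv
    rw [hcc, hmapcenter, hford]
  have hMp : IsPGroup p ↥M := hG.to_subgroup M
  have hfratM : frattini ↥M = commutator ↥M := by
    apply le_antisymm
    · refine frattini_le_of (p := p) le_rfl fun e => ?_
      have hpe : ((e : G)) ^ p ∈ frattini G := pow_mem_frattini hG _
      have hmem : ((e ^ p : ↥M) : G) ∈ (commutator ↥M).map M.subtype := by
        rw [hmapcomm, hMMeq]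
        exact_mod_cast hpe
      obtain ⟨y, hy, hyy⟩ := hmem
      have hye : y = e ^ p := Subtype.ext hyy
      exact hye ▸ hy
    · intro x hx
      exact mem_frattini_iff'.mpr fun K hK => (coatom_props hMp hK).1 hx
  exact ⟨M, hMindex, hMZtop, hMZF, hfratM, hcommeq, hcardcenter,
    by rw [hfratM, hmapcomm, hMMeq]⟩
end

section
/- Let p be an odd prime, let r ≥ 2, and let G be an extraspecial p-group of order p^{1+2r} and exponent p^2. Then there exist subgroups H and C of G such that H has order p^{2r-1} and exponent p^2, C has order p, H ∩ C = 1, every element of H commutes with every element of C, and the subgroup H·C generated by H and C has index p in G. -/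
open Subgroup
open scoped commutatorElement

/-- Collection formula: if `y*x = x*y*z` with `z` commuting with everything,
then `(x*y)^n = x^n*y^n*z^(n.choose 2)`. -/
lemma aux_swap {G : Type*} [Group G] (x y z : G) (hyx : y * x = x * y * z)
    (hz : ∀ b, Commute z b) : ∀ n : ℕ, y ^ n * x = x * y ^ n * z ^ n := by
  intro n
  induction n with
  | zero => simp
  | succ n ih =>
    calc y ^ (n+1) * x = y * (y ^ n * x) := by rw [pow_succ' y n]; group
      _ = y * (x * y ^ n * z ^ n) := by rw [ih]
      _ = (y * x) * y ^ n * z ^ n := by group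
      _ = (x * y * z) * y ^ n * z ^ n := by rw [hyx]
      _ = x * y * (z * y ^ n) * z ^ n := by group
      _ = x * y * (y ^ n * z) * z ^ n := by rw [(hz (y ^ n)).eq]
      _ = x * y ^ (n+1) * z ^ (n+1) := by rw [pow_succ' y n, pow_succ z n]; group

lemma aux_collect {G : Type*} [Group G] (x y z : G) (hyx : y * x = x * y * z)
    (hz : ∀ b, Commute z b) : ∀ n : ℕ, (x * y) ^ n = x ^ n * y ^ n * z ^ (n.choose 2) := by
  intro n
  induction n with
  | zero => simp
  | succ n ih =>
    calc (x*y) ^ (n+1) = (x*y) ^ n * (x*y) := pow_succ _ _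
      _ = x ^ n * y ^ n * z ^ (n.choose 2) * (x * y) := by rw [ih]
      _ = x ^ n * y ^ n * (x * y) * z ^ (n.choose 2) := by
          rw [mul_assoc (x ^ n * y ^ n), ((hz (x*y)).pow_left _).eq, ← mul_assoc]
      _ = x ^ n * (y ^ n * x) * y * z ^ (n.choose 2) := by group
      _ = x ^ n * (x * y ^ n * z ^ n) * y * z ^ (n.choose 2) := by rw [aux_swap x y z hyx hz n]
      _ = x ^ (n+1) * y ^ n * (z ^ n * y) * z ^ (n.choose 2) := by rw [pow_succ x n]; group
      _ = x ^ (n+1) * y ^ n * (y * z ^ n) * z ^ (n.choose 2) := by rw [((hz y).pow_left n).eq]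
      _ = x ^ (n+1) * y ^ (n+1) * (z ^ n * z ^ (n.choose 2)) := by rw [pow_succ' y n]; group
      _ = x ^ (n+1) * y ^ (n+1) * z ^ ((n+1).choose 2) := by
          rw [← pow_add, Nat.choose_succ_succ, Nat.choose_one_right]
open Subgroup

/-- In a finite `p`-group, `x^p` lies in every maximal subgroup. -/
lemma aux_coatom {p : ℕ} (hp : p.Prime) {G : Type*} [Group G] [Fintype G] {n : ℕ}
    (hcard : Fintype.card G = p ^ n) {M : Subgroup G} (hM : IsCoatom M) (x : G) :
    x ^ p ∈ M := by
  haveI : Fact p.Prime := ⟨hp⟩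
  have hpG : IsPGroup p G := IsPGroup.of_card (by rw [Nat.card_eq_fintype_card, hcard])
  haveI : Group.IsNilpotent G := hpG.isNilpotent
  have hnc : NormalizerCondition G := normalizerCondition_of_isNilpotent
  have hlt : M < normalizer (M : Set G) := hnc M (lt_top_iff_ne_top.mpr hM.1)
  haveI hMn : M.Normal := Subgroup.normalizer_eq_top_iff.mp (hM.2 _ hlt)
  set π := QuotientGroup.mk' M with hπ
  -- every subgroup of the quotient is ⊥ or ⊤
  have hsub : ∀ S : Subgroup (G ⧸ M), S = ⊥ ∨ S = ⊤ := by
    intro S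
    have hMT : M ≤ S.comap π := by
      intro m hm
      simp only [Subgroup.mem_comap, hπ]
      have : π m = 1 := (QuotientGroup.eq_one_iff m).mpr hm
      rw [this]; exact S.one_mem
    have hS : S = Subgroup.map π (S.comap π) :=
      (Subgroup.map_comap_eq_self_of_surjective (QuotientGroup.mk'_surjective M) S).symm
    rcases hMT.lt_or_eq with h | h
    · right
      rw [hS, hM.2 _ h, Subgroup.map_top_of_surjective _ (QuotientGroup.mk'_surjective M)]
    · left
      rw [hS, ← h, Subgroup.map_eq_bot_iff, QuotientGroup.ker_mk' M]
  -- the quotient is nontrivial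
  obtain ⟨g, hg⟩ : ∃ g, g ∉ M := by
    by_contra h
    push_neg at h
    exact hM.1 (Subgroup.eq_top_iff' M |>.mpr h)
  have hg1 : π g ≠ 1 := fun h => hg ((QuotientGroup.eq_one_iff g).mp h)
  -- find an element of order p in the quotient
  have hpQ : IsPGroup p (G ⧸ M) := hpG.to_quotient M
  obtain ⟨k, hk⟩ := hpQ (π g)
  obtain ⟨j, hjk, hj⟩ := (Nat.dvd_prime_pow hp).mp (orderOf_dvd_of_pow_eq_one hk)
  have hj0 : j ≠ 0 := by
    intro h
    rw [h, pow_zero] at hj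
    exact hg1 (orderOf_eq_one_iff.mp hj)
  set w : G ⧸ M := (π g) ^ (p ^ (j - 1)) with hw
  have hwo : orderOf w = p := by
    rw [hw, orderOf_pow, hj]
    have hdvd : p ^ (j-1) ∣ p ^ j := pow_dvd_pow p (Nat.sub_le j 1)
    rw [Nat.gcd_eq_right hdvd]
    have : p ^ j = p ^ (j-1) * p := by
      rw [← pow_succ]
      congr 1
      omega
    rw [this, Nat.mul_div_cancel_left _ (pow_pos hp.pos _)]
  have hw1 : w ≠ 1 := by
    intro h
    rw [h, orderOf_one] at hwo
    exact hp.one_lt.ne' hwo.symm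
  -- zpowers w = ⊤, so the quotient has order p
  have hzw : Subgroup.zpowers w = ⊤ := by
    rcases hsub (Subgroup.zpowers w) with h | h
    · exact absurd (h ▸ Subgroup.mem_zpowers w) (by simp [hw1])
    · exact h
  have hcardQ : Nat.card (G ⧸ M) = p := by
    rw [← Subgroup.card_top (G := G ⧸ M), ← hzw, Nat.card_zpowers, hwo]
  -- conclude
  have : (π x) ^ p = 1 := by
    rw [← hcardQ]
    exact pow_card_eq_one'
  rw [← map_pow] at this
  exact (QuotientGroup.eq_one_iff _).mp this

open Subgroup

/-- In a finite commutative group of exponent dividing a prime `p`, any nontrivial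
element can be avoided by a subgroup of index `p`. -/
lemma aux_hyperplane {p : ℕ} (hp : p.Prime) {Q : Type*} [CommGroup Q] [Finite Q]
    (hQp : ∀ u : Q, u ^ p = 1) (q : Q) (hq : q ≠ 1) :
    ∃ N : Subgroup Q, q ∉ N ∧ N.index = p := by
  haveI : Fact p.Prime := ⟨hp⟩
  obtain ⟨N, hNS, hNmax⟩ := Set.Finite.exists_maximalFor (id : Subgroup Q → Subgroup Q)
    {N : Subgroup Q | q ∉ N} (Set.toFinite _) ⟨⊥, by simp [Subgroup.mem_bot, hq]⟩
  simp only [Set.mem_setOf_eq, id] at hNS hNmax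
  refine ⟨N, hNS, ?_⟩
  haveI : N.Normal := Subgroup.normal_of_comm N
  set ρ := QuotientGroup.mk' N with hρ
  have hq1 : ρ q ≠ 1 := fun h => hNS ((QuotientGroup.eq_one_iff q).mp h)
  have hqo : orderOf (ρ q) = p :=
    orderOf_eq_prime (by rw [← map_pow, hQp q, map_one]) hq1
  have claim : ∀ u : Q ⧸ N, u ∈ zpowers (ρ q) := by
    intro u
    obtain ⟨x, rfl⟩ := QuotientGroup.mk'_surjective N u
    by_cases hx : x ∈ N
    · have h1 : ρ x = 1 := (QuotientGroup.eq_one_iff x).mpr hx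
      rw [h1]
      exact Subgroup.one_mem _
    · have hqin : q ∈ N ⊔ zpowers x := by
        by_contra hq2
        have heq := hNmax hq2 le_sup_left
        exact hx (heq (Subgroup.mem_sup_right (Subgroup.mem_zpowers x)))
      obtain ⟨n, hn, w, hw, heq⟩ := Subgroup.mem_sup.mp hqin
      obtain ⟨k, rfl⟩ := Subgroup.mem_zpowers_iff.mp hw
      have hρq : ρ q = (ρ x) ^ k := by
        have hn1 : ρ n = 1 := (QuotientGroup.eq_one_iff n).mpr hn
        rw [← heq, map_mul, hn1, one_mul, map_zpow]
      have hxo : orderOf (ρ x) = p :=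
        orderOf_eq_prime (by rw [← map_pow, hQp x, map_one])
          (fun h => hx ((QuotientGroup.eq_one_iff x).mp h))
      have hle : zpowers (ρ q) ≤ zpowers (ρ x) :=
        Subgroup.zpowers_le.mpr (Subgroup.mem_zpowers_iff.mpr ⟨k, hρq.symm⟩)
      have heq2 : zpowers (ρ q) = zpowers (ρ x) :=
        Subgroup.eq_of_le_of_card_ge hle
          (by rw [Nat.card_zpowers, Nat.card_zpowers, hqo, hxo])
      rw [heq2]
      exact Subgroup.mem_zpowers _
  have htop : zpowers (ρ q) = ⊤ := eq_top_iff.mpr (fun u _ => claim u)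
  have : N.index = Nat.card (Q ⧸ N) := rfl
  rw [this, ← Subgroup.card_top (G := Q ⧸ N), ← htop, Nat.card_zpowers, hqo]

/-- If p is an odd prime, r ≥ 2, and G is an extraspecial p-group of order
p^{1+2r} and exponent p², then there are subgroups H and C with |H| = p^{2r-1},
H of exponent p², |C| = p, H ∩ C = 1, elements of H and C commuting, and the
subgroup H·C generated by H and C of index p in G. -/
theorem extraspecial_exponent_p_sq_exists_subgroups
    (p r : ℕ) (hp : p.Prime) (hodd : Odd p) (hr : 2 ≤ r)
    (G : Type*) [Group G] [Fintype G]
    (hfc : frattini G = commutator G)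
    (hcz : commutator G = Subgroup.center G)
    (hzcard : Nat.card (Subgroup.center G) = p)
    (hcard : Fintype.card G = p ^ (1 + 2 * r))
    (hexp : Monoid.exponent G = p ^ 2) :
    ∃ H C : Subgroup G,
      Nat.card H = p ^ (2 * r - 1) ∧
      Monoid.exponent ↥H = p ^ 2 ∧
      Nat.card C = p ∧
      H ⊓ C = ⊥ ∧
      (∀ h ∈ H, ∀ c ∈ C, Commute h c) ∧
      (H ⊔ C).index = p := by
  haveI : Fact p.Prime := ⟨hp⟩
  have hp1 : 1 < p := hp.one_lt
  have hcardN : Nat.card G = p ^ (1 + 2 * r) := by rw [Nat.card_eq_fintype_card, hcard]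
  -- commutators are central
  have hcomm : ∀ x y : G, ⁅x, y⁆ ∈ center G := by
    intro x y
    rw [← hcz, _root_.commutator_def]
    exact Subgroup.commutator_mem_commutator (mem_top x) (mem_top y)
  -- central elements have p-th power one
  have zc : ∀ w ∈ center G, w ^ p = 1 := by
    intro w hw
    have h1 : (⟨w, hw⟩ : center G) ^ p = 1 := by
      rw [← hzcard]; exact pow_card_eq_one'
    have := congrArg (Subtype.val) h1
    simpa using this
  -- p-th power is a homomorphism
  have hppow : ∀ x y : G, (x * y) ^ p = x ^ p * y ^ p := by
    intro x y
    have hyx : y * x = x * y * ⁅y⁻¹, x⁻¹⁆ := by rw [commutatorElement_def]; group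
    have hzc : ∀ b, Commute (⁅y⁻¹, x⁻¹⁆) b := by
      intro b
      exact ((Subgroup.mem_center_iff.mp (hcomm y⁻¹ x⁻¹)) b).symm
    have := aux_collect x y _ hyx hzc p
    rw [this]
    obtain ⟨m, hm⟩ := hodd
    have hm1 : p - 1 = 2 * m := by omega
    have hch : p.choose 2 = p * m := by
      rw [Nat.choose_two_right, hm1, show p * (2 * m) = 2 * (p * m) by ring,
        Nat.mul_div_cancel_left _ (by norm_num)]
    rw [hch, pow_mul, zc _ (hcomm y⁻¹ x⁻¹), one_pow, mul_one]
  -- p-th powers are central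
  have hXp : ∀ x : G, x ^ p ∈ center G := by
    intro x
    have hfr : x ^ p ∈ frattini G := by
      unfold frattini Order.radical
      simp only [Subgroup.mem_iInf, Set.mem_setOf_eq]
      intro M hM
      exact aux_coatom hp hcard hM x
    rw [hfc, hcz] at hfr
    exact hfr
  -- an element of order p^2
  obtain ⟨a, ha⟩ : ∃ a : G, a ^ p ≠ 1 := by
    by_contra h
    push_neg at h
    have := Monoid.exponent_dvd_of_forall_pow_eq_one h
    rw [hexp] at this
    have := Nat.le_of_dvd hp.pos this
    nlinarith
  have hao : orderOf a = p ^ 2 := by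
    obtain ⟨j, hj2, hj⟩ := (Nat.dvd_prime_pow hp).mp (hexp ▸ Monoid.order_dvd_exponent a)
    interval_cases j
    · exact absurd (orderOf_eq_one_iff.mp hj) (by rintro rfl; exact ha (one_pow p))
    · rw [pow_one] at hj; exact absurd (hj ▸ pow_orderOf_eq_one a) ha
    · exact hj
  have hanc : a ∉ center G := fun h => ha (zc a h)
  -- the center is generated by a^p
  have hZa : zpowers (a ^ p) = center G := by
    apply Subgroup.eq_of_le_of_card_ge (Subgroup.zpowers_le.mpr (hXp a))
    rw [hzcard, Nat.card_zpowers, orderOf_pow, hao]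
    have : Nat.gcd (p ^ 2) p = p := Nat.gcd_eq_right (dvd_pow_self p (by norm_num))
    rw [this, pow_two, Nat.mul_div_cancel _ hp.pos]
  -- centralizers of non-central elements have index p
  have hcent_index : ∀ g : G, g ∉ center G → (centralizer {g} : Subgroup G).index = p := by
    intro g hg
    have hmul : ∀ x y : G, ⁅g, x * y⁆ = ⁅g, x⁆ * ⁅g, y⁆ := by
      intro x y
      have hzc : ∀ b : G, b * ⁅g, y⁆ = ⁅g, y⁆ * b :=
        fun b => Subgroup.mem_center_iff.mp (hcomm g y) b
      have h1 : y * g⁻¹ * y⁻¹ = g⁻¹ * ⁅g, y⁆ := by rw [commutatorElement_def]; group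
      calc ⁅g, x * y⁆ = g * x * (y * g⁻¹ * y⁻¹) * x⁻¹ := by
            rw [commutatorElement_def]; group
        _ = g * x * (g⁻¹ * ⁅g, y⁆) * x⁻¹ := by rw [h1]
        _ = g * x * g⁻¹ * (⁅g, y⁆ * x⁻¹) := by group
        _ = g * x * g⁻¹ * (x⁻¹ * ⁅g, y⁆) := by rw [hzc x⁻¹]
        _ = ⁅g, x⁆ * ⁅g, y⁆ := by rw [commutatorElement_def]; group
    set f : G →* G := MonoidHom.mk' (fun x => ⁅g, x⁆) hmul with hf
    have hker : f.ker = centralizer {g} := by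
      ext x
      rw [MonoidHom.mem_ker, Subgroup.mem_centralizer_iff]
      simp only [hf, MonoidHom.mk'_apply, commutatorElement_eq_one_iff_commute]
      constructor
      · intro h s hs
        rw [Set.mem_singleton_iff.mp hs]
        exact h
      · intro h
        exact h g rfl
    rw [← hker, Subgroup.index_ker]
    have hle : f.range ≤ center G := by
      rintro _ ⟨x, rfl⟩
      exact hcomm g x
    have hdvd : Nat.card f.range ∣ p := hzcard ▸ Subgroup.card_dvd_of_le hle
    rcases (Nat.Prime.eq_one_or_self_of_dvd hp _ hdvd) with h1 | h1
    · exfalso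
      obtain ⟨x, hx⟩ : ∃ x : G, ¬ (x * g = g * x) := by
        by_contra h
        push_neg at h
        exact hg (Subgroup.mem_center_iff.mpr h)
      have : f x = 1 := by
        have := Subgroup.card_eq_one.mp h1
        have hx1 : f x ∈ f.range := ⟨x, rfl⟩
        rw [this] at hx1
        exact hx1
      simp only [hf, MonoidHom.mk'_apply, commutatorElement_eq_one_iff_commute] at this
      exact hx this.symm
    · exact h1
  -- find c : order p, commuting with a, not central
  set φ : G →* G := MonoidHom.mk' (fun g : G => g ^ p) hppow with hφ
  have hkerind : φ.ker.index ≤ p := by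
    rw [Subgroup.index_ker]
    have hle : φ.range ≤ center G := by rintro _ ⟨x, rfl⟩; exact hXp x
    exact Nat.le_of_dvd hp.pos (hzcard ▸ Subgroup.card_dvd_of_le hle)
  set L : Subgroup G := centralizer {a} with hL
  have hLind : L.index = p := hcent_index a hanc
  set W : Subgroup G := φ.ker ⊓ L with hW
  have hWind : W.index ≤ p * p := by
    calc W.index ≤ φ.ker.index * L.index := Subgroup.index_inf_le
      _ ≤ p * p := by rw [hLind]; exact Nat.mul_le_mul_right p hkerind
  have hWcard : p ^ (2 * r - 1) ≤ Nat.card W := by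
    have h1 : Nat.card W * W.index = p ^ (1 + 2 * r) := by
      rw [Subgroup.card_mul_index, hcardN]
    have h2 : p ^ (1 + 2 * r) = p ^ (2 * r - 1) * (p * p) := by
      rw [show p * p = p ^ 2 by ring, ← pow_add]
      congr 1
      omega
    have h3 : Nat.card W * (p * p) ≥ p ^ (2 * r - 1) * (p * p) := by
      calc Nat.card W * (p * p) ≥ Nat.card W * W.index :=
            Nat.mul_le_mul_left _ hWind
        _ = p ^ (2 * r - 1) * (p * p) := by rw [h1, h2]
    exact Nat.le_of_mul_le_mul_right h3 (by positivity)
  have hWbig : p < Nat.card W := by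
    calc p = p ^ 1 := (pow_one p).symm
      _ < p ^ (2 * r - 1) := Nat.pow_lt_pow_right hp1 (by omega)
      _ ≤ Nat.card W := hWcard
  obtain ⟨c, hcW, hcnc⟩ : ∃ c, c ∈ W ∧ c ∉ center G := by
    by_contra h
    push_neg at h
    have hle : W ≤ center G := fun x hx => h x hx
    have := Nat.le_of_dvd hp.pos (hzcard ▸ Subgroup.card_dvd_of_le hle)
    omega
  have hc1 : c ≠ 1 := fun h => hcnc (h ▸ (center G).one_mem)
  rw [hW, Subgroup.mem_inf] at hcW
  have hcp : c ^ p = 1 := hcW.1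
  have hco : orderOf c = p := orderOf_eq_prime hcp hc1
  have hca : a * c = c * a := by
    have h5 := hcW.2
    rw [hL, Subgroup.mem_centralizer_iff] at h5
    exact h5 a rfl
  have hcZa : c ∉ zpowers a := by
    intro h
    obtain ⟨k, hk⟩ := Subgroup.mem_zpowers_iff.mp h
    have h1 : (a ^ k) ^ (p : ℤ) = 1 := by
      rw [hk, zpow_natCast, hcp]
    rw [← zpow_mul] at h1
    have h2 : ((p : ℤ) ^ 2) ∣ k * p := by
      have h4 := orderOf_dvd_iff_zpow_eq_one.mpr h1
      rw [hao] at h4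
      exact_mod_cast h4
    have h3 : (p : ℤ) ∣ k := by
      have hpz : (p : ℤ) ≠ 0 := Int.natCast_ne_zero.mpr hp.ne_zero
      obtain ⟨t, ht⟩ := h2
      refine ⟨t, ?_⟩
      have : k * p = p * t * p := by rw [ht]; ring
      exact mul_right_cancel₀ hpz this
    obtain ⟨t, ht⟩ := h3
    apply hcnc
    rw [← hZa]
    exact Subgroup.mem_zpowers_iff.mpr ⟨t, by rw [← hk, ht, ← zpow_natCast a p, ← zpow_mul]⟩
  -- the centralizer K of c
  set K : Subgroup G := centralizer {c} with hK
  have hKind : K.index = p := hcent_index c hcnc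
  have hKcard : Nat.card K = p ^ (2 * r) := by
    have h1 : Nat.card K * K.index = p ^ (1 + 2 * r) := by
      rw [Subgroup.card_mul_index, hcardN]
    rw [hKind] at h1
    have h2 : p ^ (1 + 2 * r) = p ^ (2 * r) * p := by
      rw [← pow_succ]; congr 1; omega
    rw [h2] at h1
    exact Nat.eq_of_mul_eq_mul_right hp.pos h1
  have haK : a ∈ K := by
    rw [hK, Subgroup.mem_centralizer_iff]
    intro g hg
    rw [Set.mem_singleton_iff.mp hg]
    exact hca.symm
  have hcK : c ∈ K := by
    rw [hK, Subgroup.mem_centralizer_iff]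
    intro g hg
    rw [Set.mem_singleton_iff.mp hg]
  set a' : ↥K := ⟨a, haK⟩ with ha'
  set c' : ↥K := ⟨c, hcK⟩ with hc'
  set A : Subgroup ↥K := zpowers a' with hA
  have hAmem : ∀ x : ↥K, x ∈ A ↔ (x : G) ∈ zpowers a := by
    intro x
    constructor
    · intro hx
      obtain ⟨k, hk⟩ := Subgroup.mem_zpowers_iff.mp hx
      refine Subgroup.mem_zpowers_iff.mpr ⟨k, ?_⟩
      rw [← hk]
      push_cast
      rfl
    · intro hx
      obtain ⟨k, hk⟩ := Subgroup.mem_zpowers_iff.mp hx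
      refine Subgroup.mem_zpowers_iff.mpr ⟨k, ?_⟩
      apply Subtype.ext
      push_cast
      exact hk
  have hZle : ∀ w : G, w ∈ center G → w ∈ zpowers a := by
    intro w hw
    rw [← hZa] at hw
    obtain ⟨t, ht⟩ := Subgroup.mem_zpowers_iff.mp hw
    refine Subgroup.mem_zpowers_iff.mpr ⟨p * t, ?_⟩
    rw [← ht, ← zpow_natCast a p, ← zpow_mul]
  haveI hAnormal : A.Normal := by
    constructor
    intro n hn g
    obtain ⟨k, hk⟩ := Subgroup.mem_zpowers_iff.mp hn
    have h1 : g * a' * g⁻¹ ∈ A := by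
      rw [hAmem]
      have hz2 : ⁅a⁻¹, ((g : G))⁆ ∈ zpowers a := hZle _ (hcomm _ _)
      obtain ⟨m, hm⟩ := Subgroup.mem_zpowers_iff.mp hz2
      have hcoe : ((g * a' * g⁻¹ : ↥K) : G) = a * ⁅a⁻¹, ((g : G))⁆ := by
        push_cast
        rw [commutatorElement_def]
        group
        rfl
      rw [hcoe, ← hm]
      exact Subgroup.mem_zpowers_iff.mpr ⟨1 + m, by rw [zpow_add, zpow_one]⟩
    rw [← hk]
    have h2 : g * a' ^ k * g⁻¹ = (g * a' * g⁻¹) ^ k := by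
      simpa using (map_zpow (MulAut.conj g) a' k).symm
    rw [h2]
    exact Subgroup.zpow_mem A h1 k
  have hQcomm : ∀ u v : ↥K ⧸ A, u * v = v * u := by
    intro u v
    obtain ⟨x, rfl⟩ := QuotientGroup.mk'_surjective A u
    obtain ⟨y, rfl⟩ := QuotientGroup.mk'_surjective A v
    rw [← map_mul, ← map_mul]
    have h1 : ((x * y)⁻¹ * (y * x) : ↥K) ∈ A := by
      rw [hAmem]
      have h2 : (((x * y)⁻¹ * (y * x) : ↥K) : G) = ⁅((y : G))⁻¹, ((x : G))⁻¹⁆ := by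
        push_cast
        rw [commutatorElement_def]
        group
      rw [h2]
      exact hZle _ (hcomm _ _)
    show QuotientGroup.mk (x * y) = QuotientGroup.mk (y * x)
    rw [QuotientGroup.eq]
    exact h1
  letI : CommGroup (↥K ⧸ A) :=
    { (inferInstance : Group (↥K ⧸ A)) with mul_comm := hQcomm }
  have hQp : ∀ u : ↥K ⧸ A, u ^ p = 1 := by
    intro u
    obtain ⟨x, rfl⟩ := QuotientGroup.mk'_surjective A u
    rw [← map_pow]
    apply (QuotientGroup.eq_one_iff _).mpr
    rw [hAmem]
    have h2 : ((x ^ p : ↥K) : G) = (x : G) ^ p := by push_cast; rfl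
    rw [h2]
    exact hZle _ (hXp (x : G))
  have hq1 : (QuotientGroup.mk' A) c' ≠ 1 := by
    intro h
    exact hcZa ((hAmem c').mp ((QuotientGroup.eq_one_iff c').mp h))
  obtain ⟨N, hqN, hNind⟩ := aux_hyperplane hp hQp ((QuotientGroup.mk' A) c') hq1
  set HK : Subgroup ↥K := N.comap (QuotientGroup.mk' A) with hHK
  have hHKind : HK.index = p := by
    rw [hHK, Subgroup.index_comap_of_surjective N (QuotientGroup.mk'_surjective A), hNind]
  set H : Subgroup G := HK.map K.subtype with hH
  have hHle : H ≤ K := Subgroup.map_subtype_le HK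
  have haH : a ∈ H := by
    refine Subgroup.mem_map.mpr ⟨a', ?_, rfl⟩
    rw [hHK, Subgroup.mem_comap]
    have h1 : (QuotientGroup.mk' A) a' = 1 :=
      (QuotientGroup.eq_one_iff a').mpr (Subgroup.mem_zpowers a')
    rw [h1]
    exact N.one_mem
  have hcH : c ∉ H := by
    intro h
    obtain ⟨x, hx, hxc⟩ := Subgroup.mem_map.mp h
    have hxe : x = c' := Subtype.ext hxc
    rw [hxe, hHK, Subgroup.mem_comap] at hx
    exact hqN hx
  have hHcard : Nat.card H = p ^ (2 * r - 1) := by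
    have h1 : Nat.card H = Nat.card HK :=
      Nat.card_congr (Subgroup.equivMapOfInjective HK K.subtype K.subtype_injective).symm.toEquiv
    have h2 : Nat.card HK * HK.index = Nat.card ↥K := Subgroup.card_mul_index HK
    rw [hHKind, hKcard] at h2
    have h3 : p ^ (2 * r) = p ^ (2 * r - 1) * p := by
      rw [← pow_succ]; congr 1; omega
    rw [h3] at h2
    rw [h1]
    exact Nat.eq_of_mul_eq_mul_right hp.pos h2
  have hHind : H.index = p ^ 2 := by
    have h1 : Nat.card H * H.index = p ^ (1 + 2 * r) := by
      rw [Subgroup.card_mul_index, hcardN]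
    rw [hHcard] at h1
    have h2 : p ^ (1 + 2 * r) = p ^ (2 * r - 1) * p ^ 2 := by
      rw [← pow_add]; congr 1; omega
    rw [h2] at h1
    exact Nat.eq_of_mul_eq_mul_left (by positivity) h1
  set C : Subgroup G := zpowers c with hC
  have hCcard : Nat.card C = p := by rw [hC, Nat.card_zpowers, hco]
  have hCle : C ≤ K := by rw [hC]; exact Subgroup.zpowers_le.mpr hcK
  have hinf : H ⊓ C = ⊥ := by
    have hd : Nat.card ↥(H ⊓ C) ∣ p := hCcard ▸ Subgroup.card_dvd_of_le inf_le_right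
    rcases hp.eq_one_or_self_of_dvd _ hd with h1 | h1
    · exact Subgroup.card_eq_one.mp h1
    · exfalso
      have h2 : H ⊓ C = C :=
        Subgroup.eq_of_le_of_card_ge inf_le_right (by rw [h1, hCcard])
      have h3 : c ∈ H ⊓ C := by
        rw [h2]
        exact Subgroup.mem_zpowers c
      exact hcH h3.1
  have hcommHC : ∀ h ∈ H, ∀ c0 ∈ C, Commute h c0 := by
    intro h hh c0 hc0
    have hhK : h ∈ K := hHle hh
    rw [hK, Subgroup.mem_centralizer_iff] at hhK
    have h1 : Commute h c := (hhK c rfl).symm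
    obtain ⟨k, hk⟩ := Subgroup.mem_zpowers_iff.mp hc0
    rw [← hk]
    exact h1.zpow_right k
  have hJ : (H ⊔ C).index = p := by
    have hJle : H ⊔ C ≤ K := sup_le hHle hCle
    have d1 : (H ⊔ C).index ∣ p ^ 2 := hHind ▸ Subgroup.index_dvd_of_le le_sup_left
    have d2 : p ∣ (H ⊔ C).index := hKind ▸ Subgroup.index_dvd_of_le hJle
    have hne : (H ⊔ C).index ≠ p ^ 2 := by
      intro h
      have h1 : Nat.card ↥(H ⊔ C) * (H ⊔ C).index = Nat.card ↥H * H.index := by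
        rw [Subgroup.card_mul_index, Subgroup.card_mul_index]
      rw [h, hHind] at h1
      have h2 : Nat.card ↥(H ⊔ C) = Nat.card ↥H :=
        Nat.eq_of_mul_eq_mul_right (by positivity) h1
      have h3 : H = H ⊔ C := Subgroup.eq_of_le_of_card_ge le_sup_left (le_of_eq h2)
      exact hcH (h3 ▸ (Subgroup.mem_sup_right (Subgroup.mem_zpowers c)))
    obtain ⟨j, hj2, hj⟩ := (Nat.dvd_prime_pow hp).mp d1
    interval_cases j
    · rw [pow_zero] at hj
      rw [hj] at d2
      have := Nat.le_of_dvd one_pos d2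
      omega
    · rw [pow_one] at hj
      exact hj
    · exact absurd hj hne
  have hexpH : Monoid.exponent ↥H = p ^ 2 := by
    apply Nat.dvd_antisymm
    · rw [← hexp]
      exact Monoid.exponent_dvd_of_monoidHom H.subtype H.subtype_injective
    · have h1 : orderOf (⟨a, haH⟩ : ↥H) = p ^ 2 := by
        rw [← orderOf_coe]
        exact hao
      rw [← h1]
      exact Monoid.order_dvd_exponent _
  exact ⟨H, C, hHcard, hexpH, hCcard, hinf, hcommHC, hJ⟩
end
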